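/- Let k be an algebraically closed field of characteristic ≠ 2, let V be a k-vector space of dimension 2n+1 with a nondegenerate symmetric bilinear form B, and let S, T : V → V be two endomorphisms that are both self-adjoint with respect to B (B(Tv,w) = B(v,Tw) and B(Sv,w) = B(v,Sw) for all v,w). If S and T have the same characteristic polynomial and this polynomial is separable, then there exists g ∈ GL(V) with det(g) = 1 and B(gv,gw) = B(v,w) for all v,w ∈ V, such that S = g T g⁻¹. -/

import Mathlib

open Polynomial

section Aux
variable {k V : Type*} [Field k] [AddCommGroup V] [Module k V] [FiniteDimensional k V]

lemma my_eval_charpoly (T : V →ₗ[k] V) (μ : k) :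
    (LinearMap.charpoly T).eval μ = LinearMap.det (μ • (LinearMap.id : V →ₗ[k] V) - T) := by
  classical
  let b := Module.finBasis k V
  rw [← LinearMap.charpoly_toMatrix T b, Matrix.charpoly, eval_det,
    Matrix.matPolyEquiv_charmatrix, eval_sub, eval_X, eval_C]
  rw [← LinearMap.det_toMatrix b, map_sub, map_smul, LinearMap.toMatrix_id]
  congr 2
  simp [Matrix.scalar_apply, Matrix.smul_one_eq_diagonal]

lemma my_exists_eigenvector (T : V →ₗ[k] V) (μ : k)
    (h : (LinearMap.charpoly T).IsRoot μ) : ∃ x : V, x ≠ 0 ∧ T x = μ • x := by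
  have hdet : LinearMap.det (μ • (LinearMap.id : V →ₗ[k] V) - T) = 0 := by
    rw [← my_eval_charpoly]; exact h
  have hlt := LinearMap.bot_lt_ker_of_det_eq_zero hdet
  obtain ⟨x, hx, hx0⟩ := Submodule.ne_bot_iff _ |>.mp hlt.ne'
  refine ⟨x, hx0, ?_⟩
  have h2 : μ • x - T x = 0 := by simpa using hx
  exact (sub_eq_zero.mp h2).symm

variable [IsAlgClosed k]

lemma my_eigenbasis (B : LinearMap.BilinForm k V)
    (hnd : ∀ x : V, (∀ y : V, B x y = 0) → x = 0)
    (T : V →ₗ[k] V) (hT : ∀ x y : V, B (T x) y = B x (T y))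
    (Λ : Finset k) (hcard : Λ.card = Module.finrank k V)
    (hpos : 0 < Module.finrank k V)
    (hroot : ∀ μ ∈ Λ, (LinearMap.charpoly T).IsRoot μ) :
    ∃ w : Module.Basis ↥Λ k V, (∀ i : ↥Λ, T (w i) = (i : k) • w i) ∧
      (∀ i : ↥Λ, B (w i) (w i) = 1) ∧
      ∀ i j : ↥Λ, i ≠ j → B (w i) (w j) = 0 := by
  classical
  haveI : Nonempty ↥Λ := by
    rw [← Fintype.card_pos_iff, Fintype.card_coe, hcard]; exact hpos
  have hex : ∀ i : ↥Λ, ∃ x : V, x ≠ 0 ∧ T x = (i : k) • x :=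
    fun i => my_exists_eigenvector T i (hroot i i.2)
  choose u hu0 huT using hex
  have li : LinearIndependent k u := by
    apply Module.End.eigenvectors_linearIndependent' (T : Module.End k V)
      (fun i : ↥Λ => (i : k)) Subtype.coe_injective
    intro i
    exact ⟨Module.End.mem_eigenspace_iff.mpr (huT i), hu0 i⟩
  have hcard' : Fintype.card ↥Λ = Module.finrank k V := by
    rw [Fintype.card_coe, hcard]
  let b := basisOfLinearIndependentOfCardEqFinrank li hcard'
  have hb : ∀ i, b i = u i := fun i => by
    simp [b, coe_basisOfLinearIndependentOfCardEqFinrank]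
  have hB2 : ∀ (a a' : k) (x y : V), B (a • x) (a' • y) = a * a' * B x y := by
    intro a a' x y
    simp only [LinearMap.map_smul, LinearMap.smul_apply, smul_eq_mul]
    ring
  have horth : ∀ i j : ↥Λ, i ≠ j → B (u i) (u j) = 0 := by
    intro i j hij
    have h1 : (i : k) * B (u i) (u j) = (j : k) * B (u i) (u j) := by
      have h0 := hT (u i) (u j)
      rw [huT i, huT j] at h0
      simpa [smul_eq_mul] using h0
    have hij' : (i : k) - (j : k) ≠ 0 := by
      intro h
      exact hij (Subtype.coe_injective (sub_eq_zero.mp h))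
    have h2 : ((i : k) - (j : k)) * B (u i) (u j) = 0 := by
      rw [sub_mul, h1, sub_self]
    rcases mul_eq_zero.mp h2 with h | h
    · exact absurd h hij'
    · exact h
  have hdiag : ∀ i : ↥Λ, B (u i) (u i) ≠ 0 := by
    intro i h
    apply hu0 i
    apply hnd
    have hz : (B (u i)) = (0 : V →ₗ[k] k) := by
      apply b.ext
      intro j
      rw [hb j]
      by_cases hj : i = j
      · subst hj; simpa using h
      · simpa using horth i j hj
    intro y
    rw [hz]
    rfl
  have hsq : ∀ i : ↥Λ, ∃ c : k, c ≠ 0 ∧ c * c * B (u i) (u i) = 1 := by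
    intro i
    obtain ⟨c, hc⟩ := IsAlgClosed.exists_pow_nat_eq ((B (u i) (u i))⁻¹) (n := 2) (by norm_num)
    have hc' : c * c = (B (u i) (u i))⁻¹ := by rw [← hc]; ring
    refine ⟨c, ?_, ?_⟩
    · rintro rfl
      simp at hc'
      exact hdiag i hc'.symm
    · rw [hc']; exact inv_mul_cancel₀ (hdiag i)
  choose c hc0 hc1 using hsq
  let ε : ↥Λ → kˣ := fun i => Units.mk0 (c i) (hc0 i)
  have hε : ∀ i, ((ε i : k)) = c i := fun i => rfl
  refine ⟨b.unitsSMul ε, ?_, ?_, ?_⟩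
  · intro i
    rw [Module.Basis.unitsSMul_apply, hb i, Units.smul_def, hε, map_smul, huT i, smul_comm]
  · intro i
    rw [Module.Basis.unitsSMul_apply, hb i, Units.smul_def, hε, hB2, hc1]
  · intro i j hij
    rw [Module.Basis.unitsSMul_apply, Module.Basis.unitsSMul_apply, hb i, hb j, Units.smul_def,
      Units.smul_def, hε, hε, hB2, horth i j hij, mul_zero]






lemma my_pair {Λ : Finset k} (B : LinearMap.BilinForm k V)
    (S T : V →ₗ[k] V)
    (w v : Module.Basis ↥Λ k V)
    (hw : ∀ i : ↥Λ, T (w i) = (i : k) • w i)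
    (hv : ∀ i : ↥Λ, S (v i) = (i : k) • v i)
    (how1 : ∀ i : ↥Λ, B (w i) (w i) = 1)
    (how0 : ∀ i j : ↥Λ, i ≠ j → B (w i) (w j) = 0)
    (hov1 : ∀ i : ↥Λ, B (v i) (v i) = 1)
    (hov0 : ∀ i j : ↥Λ, i ≠ j → B (v i) (v j) = 0) :
    (LinearMap.det (w.equiv v (Equiv.refl _)).toLinearMap) ^ 2 = 1 ∧
    (∀ x y : V, B ((w.equiv v (Equiv.refl _)) x) ((w.equiv v (Equiv.refl _)) y) = B x y) ∧
    (∀ x : V, S ((w.equiv v (Equiv.refl _)) x) = (w.equiv v (Equiv.refl _)) (T x)) := by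
  classical
  set g := w.equiv v (Equiv.refl _) with hg
  have hgw : ∀ i, g (w i) = v i := fun i => by simp [hg, Module.Basis.equiv_apply]
  have hcomp : B.comp g.toLinearMap g.toLinearMap = B := by
    apply w.ext
    intro i
    apply w.ext
    intro j
    rw [LinearMap.BilinForm.comp_apply]
    simp only [LinearEquiv.coe_coe, hgw]
    by_cases h : i = j
    · subst h; rw [hov1, how1]
    · rw [hov0 i j h, how0 i j h]
  have hB : ∀ x y : V, B (g x) (g y) = B x y := by
    intro x y
    have := LinearMap.congr_fun (LinearMap.congr_fun hcomp x) y
    simpa [LinearMap.BilinForm.comp_apply] using this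
  have hMw : LinearMap.BilinForm.toMatrix w B = 1 := by
    ext i j
    rw [LinearMap.BilinForm.toMatrix_apply]
    by_cases h : i = j
    · subst h; rw [how1, Matrix.one_apply_eq]
    · rw [how0 i j h, Matrix.one_apply_ne h]
  have hA := LinearMap.BilinForm.toMatrix_comp w w B g.toLinearMap g.toLinearMap
  rw [hcomp, hMw, Matrix.mul_one] at hA
  have hdet : (LinearMap.det g.toLinearMap) ^ 2 = 1 := by
    have h1 : (1 : Matrix ↥Λ ↥Λ k).det = 1 := Matrix.det_one
    rw [hA] at h1
    rw [Matrix.det_mul, Matrix.det_transpose] at h1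
    rw [← LinearMap.det_toMatrix w, pow_two]
    exact h1
  have hST : ∀ x : V, S (g x) = g (T x) := by
    have : S ∘ₗ (g : V →ₗ[k] V) = (g : V →ₗ[k] V) ∘ₗ T := by
      apply w.ext
      intro i
      simp only [LinearMap.comp_apply, LinearEquiv.coe_coe, hgw, hw i, hv i, map_smul, hgw]
    intro x
    have := LinearMap.congr_fun this x
    simpa using this
  exact ⟨hdet, hB, hST⟩

end Aux


/-- Let `k` be an algebraically closed field of characteristic `≠ 2`, `V` a `k`-vector
space of dimension `2n+1` with a nondegenerate symmetric bilinear form `B`, and `S, T` two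
`B`-self-adjoint endomorphisms of `V`.  If `S` and `T` have the same characteristic
polynomial and it is separable, then `S = g T g⁻¹` for some `g` preserving `B` with
`det g = 1`. -/
theorem self_adjoint_conjugate_over_alg_closed {k V : Type*} [Field k] [IsAlgClosed k]
    (hchar : (2 : k) ≠ 0) [AddCommGroup V] [Module k V] [FiniteDimensional k V]
    (n : ℕ) (hn : 1 ≤ n) (hdim : Module.finrank k V = 2 * n + 1)
    (B : LinearMap.BilinForm k V) (hsymm : ∀ v w : V, B v w = B w v)
    (hnd : ∀ v : V, (∀ w : V, B v w = 0) → v = 0)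
    (S T : V →ₗ[k] V)
    (hS : ∀ v w : V, B (S v) w = B v (S w))
    (hT : ∀ v w : V, B (T v) w = B v (T w))
    (hchareq : LinearMap.charpoly S = LinearMap.charpoly T)
    (hsep : (LinearMap.charpoly T).Separable) :
    ∃ g : V ≃ₗ[k] V, LinearMap.det g.toLinearMap = 1 ∧
      (∀ v w : V, B (g v) (g w) = B v w) ∧
      ∀ v : V, S v = g (T (g.symm v)) := by
  classical
  set p := LinearMap.charpoly T with hp
  have hmonic : p.Monic := LinearMap.charpoly_monic T
  have hp0 : p ≠ 0 := hmonic.ne_zero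
  have hdeg : p.natDegree = Module.finrank k V := LinearMap.charpoly_natDegree T
  have hsplit : p.Splits := IsAlgClosed.splits p
  have hcardroots : p.roots.card = p.natDegree := (splits_iff_card_roots).mp hsplit
  have hnodup : p.roots.Nodup := nodup_roots hsep
  set Λ := p.roots.toFinset with hΛ
  have hΛcard : Λ.card = Module.finrank k V := by
    rw [hΛ, Multiset.toFinset_card_of_nodup hnodup, hcardroots, hdeg]
  have hpos : 0 < Module.finrank k V := by rw [hdim]; omega
  have hrootT : ∀ μ ∈ Λ, p.IsRoot μ := fun μ hμ =>
    isRoot_of_mem_roots (Multiset.mem_toFinset.mp hμ)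
  have hrootS : ∀ μ ∈ Λ, (LinearMap.charpoly S).IsRoot μ := fun μ hμ => by
    rw [hchareq]; exact hrootT μ hμ
  obtain ⟨w, hw, how1, how0⟩ := my_eigenbasis B hnd T hT Λ hΛcard hpos hrootT
  obtain ⟨v, hv, hov1, hov0⟩ := my_eigenbasis B hnd S hS Λ hΛcard hpos hrootS
  obtain ⟨hdet2, hB, hST⟩ := my_pair B S T w v hw hv how1 how0 hov1 hov0
  set g := w.equiv v (Equiv.refl _) with hg
  have hd : LinearMap.det g.toLinearMap = 1 ∨ LinearMap.det g.toLinearMap = -1 := by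
    have := hdet2
    rw [pow_two] at this
    exact mul_self_eq_one_iff.mp this
  have key : ∀ (g' : V ≃ₗ[k] V), (∀ x : V, S (g' x) = g' (T x)) →
      ∀ x : V, S x = g' (T (g'.symm x)) := by
    intro g' h x
    have := h (g'.symm x)
    rwa [g'.apply_symm_apply] at this
  rcases hd with h1 | h1
  · exact ⟨g, h1, hB, key g hST⟩
  · have hΛne : Λ.Nonempty := by
      rw [← Finset.card_pos, hΛcard]; exact hpos
    obtain ⟨μ0, hμ0⟩ := hΛne
    set i0 : ↥Λ := ⟨μ0, hμ0⟩ with hi0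
    set ε : ↥Λ → kˣ := fun i => if i = i0 then -1 else 1 with hε
    have hεval : ∀ i, ((ε i : k)) = if i = i0 then -1 else 1 := by
      intro i
      by_cases h : i = i0 <;> simp [hε, h]
    have hεsq : ∀ i, ((ε i : k)) * ((ε i : k)) = 1 := by
      intro i
      rw [hεval]
      by_cases h : i = i0 <;> simp [h]
    set v' := v.unitsSMul ε with hv'def
    have hv'app : ∀ i, v' i = (ε i : k) • v i := fun i => by
      rw [hv'def, Module.Basis.unitsSMul_apply, Units.smul_def]
    have hB2 : ∀ (a a' : k) (x y : V), B (a • x) (a' • y) = a * a' * B x y := by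
      intro a a' x y
      simp only [LinearMap.map_smul, LinearMap.smul_apply, smul_eq_mul]
      ring
    have hv' : ∀ i : ↥Λ, S (v' i) = (i : k) • v' i := by
      intro i
      rw [hv'app, map_smul, hv i, smul_comm]
    have hov1' : ∀ i : ↥Λ, B (v' i) (v' i) = 1 := by
      intro i
      rw [hv'app, hB2, hεsq, one_mul, hov1]
    have hov0' : ∀ i j : ↥Λ, i ≠ j → B (v' i) (v' j) = 0 := by
      intro i j hij
      rw [hv'app, hv'app, hB2, hov0 i j hij, mul_zero]
    obtain ⟨hdet2', hB', hST'⟩ := my_pair B S T w v' hw hv' how1 how0 hov1' hov0'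
    set g' := w.equiv v' (Equiv.refl _) with hg'
    refine ⟨g', ?_, hB', key g' hST'⟩
    -- determinant computation
    set e := v.equiv v' (Equiv.refl _) with he
    have hgg : g'.toLinearMap = e.toLinearMap ∘ₗ g.toLinearMap := by
      apply w.ext
      intro i
      simp [hg', he, hg, Module.Basis.equiv_apply]
    have hdetv : LinearMap.det e.toLinearMap = -1 := by
      rw [← LinearMap.det_toMatrix v]
      have hmat : LinearMap.toMatrix v v e.toLinearMap
          = Matrix.diagonal (fun i => (ε i : k)) := by
        ext i j
        rw [LinearMap.toMatrix_apply]
        simp only [he, LinearEquiv.coe_coe, Module.Basis.equiv_apply, Equiv.refl_apply, hv'app,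
          map_smul, Module.Basis.repr_self, Finsupp.smul_single, smul_eq_mul, mul_one,
          Finsupp.single_apply, Matrix.diagonal_apply]
        by_cases h : j = i
        · subst h; simp
        · have h' : i ≠ j := fun hh => h hh.symm
          simp [h, h']
      rw [hmat, Matrix.det_diagonal]
      have : ∀ i : ↥Λ, ((ε i : k)) = if i = i0 then -1 else 1 := hεval
      calc ∏ i : ↥Λ, ((ε i : k)) = ∏ i : ↥Λ, (if i = i0 then (-1 : k) else 1) := by
            exact Finset.prod_congr rfl fun i _ => hεval i
        _ = -1 := by rw [Finset.prod_ite_eq' Finset.univ i0 (fun _ => (-1 : k))]; simp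
    rw [hgg, LinearMap.det_comp, hdetv, h1]
    ring
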